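/- Let n ≥ 1, 0 < β < 1, α ∈ ℝ, and let f : ℝⁿ → ℝ be locally integrable with finite Campanato norm ‖f‖_{E^{α,1}}. Let B = B(x₀,r) be a ball, x ∈ B, and t > 8r. Then ∫_{{y : 8r ≤ |x−y| < t}} r^β |f(y) − f_B| / |x−y|^{n−1+β} dy is at most c r^{β+α} t^{1−β} ‖f‖_{E^{α,1}} if α < 0, at most c r^β t^{1−β} log(t/r) ‖f‖_{E^{α,1}} if α = 0, and at most c r^β t^{1−β+α} ‖f‖_{E^{α,1}} if α > 0, with c depending only on n, β and α. -/

import Mathlib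

open MeasureTheory Metric ENNReal

noncomputable def ballAvg (n : ℕ) (f : EuclideanSpace ℝ (Fin n) → ℝ)
    (c : EuclideanSpace ℝ (Fin n)) (r : ℝ) : ℝ :=
  (volume (closedBall c r)).toReal⁻¹ * ∫ y in closedBall c r, f y

noncomputable def bmoNorm (n : ℕ) (f : EuclideanSpace ℝ (Fin n) → ℝ) : ℝ≥0∞ :=
  ⨆ (c : EuclideanSpace ℝ (Fin n)) (r : ℝ) (_ : 0 < r),
    ENNReal.ofReal ((volume (closedBall c r)).toReal⁻¹ *
      ∫ y in closedBall c r, |f y - ballAvg n f c r|)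

noncomputable def campanatoNorm (n : ℕ) (α p : ℝ) (f : EuclideanSpace ℝ (Fin n) → ℝ) : ℝ≥0∞ :=
  ⨆ (c : EuclideanSpace ℝ (Fin n)) (r : ℝ) (_ : 0 < r),
    ENNReal.ofReal ((volume (closedBall c r)).toReal ^ (-(α / n)) *
      ((volume (closedBall c r)).toReal⁻¹ *
        ∫ y in closedBall c r, |f y - ballAvg n f c r| ^ p) ^ (1 / p))

noncomputable def campanato1Norm (n : ℕ) (α : ℝ) (f : EuclideanSpace ℝ (Fin n) → ℝ) : ℝ≥0∞ :=
  ⨆ (c : EuclideanSpace ℝ (Fin n)) (r : ℝ) (_ : 0 < r),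
    ENNReal.ofReal ((volume (closedBall c r)).toReal ^ (-(α / n)) *
      ((volume (closedBall c r)).toReal⁻¹ *
        ∫ y in closedBall c r, |f y - ballAvg n f c r|))

noncomputable def lipNorm (n : ℕ) (γ : ℝ) (f : EuclideanSpace ℝ (Fin n) → ℝ) : ℝ≥0∞ :=
  ⨆ (x : EuclideanSpace ℝ (Fin n)) (y : EuclideanSpace ℝ (Fin n)) (_ : x ≠ y),
    ENNReal.ofReal (|f x - f y| / ‖x - y‖ ^ γ)

lemma vol_toReal_pos (n : ℕ) (c : EuclideanSpace ℝ (Fin n)) {ρ : ℝ} (hρ : 0 < ρ) :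
    0 < (volume (closedBall c ρ)).toReal :=
  ENNReal.toReal_pos (measure_closedBall_pos volume c hρ).ne' measure_closedBall_lt_top.ne

lemma vol_eq (n : ℕ) (c : EuclideanSpace ℝ (Fin n)) {ρ : ℝ} (hρ : 0 ≤ ρ) :
    (volume (closedBall c ρ)).toReal
      = ρ ^ n * (volume (ball (0 : EuclideanSpace ℝ (Fin n)) 1)).toReal := by
  rw [Measure.addHaar_closedBall volume c hρ, ENNReal.toReal_mul,
    ENNReal.toReal_ofReal (pow_nonneg hρ _), finrank_euclideanSpace_fin]

lemma camp_bound (n : ℕ) (α : ℝ) (f : EuclideanSpace ℝ (Fin n) → ℝ)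
    (hfin : campanato1Norm n α f ≠ ⊤) (c : EuclideanSpace ℝ (Fin n)) {ρ : ℝ} (hρ : 0 < ρ) :
    ∫ y in closedBall c ρ, |f y - ballAvg n f c ρ|
      ≤ (volume (closedBall c ρ)).toReal ^ (α / n) * (volume (closedBall c ρ)).toReal
          * (campanato1Norm n α f).toReal := by
  set V := (volume (closedBall c ρ)).toReal with hVdef
  have hV : 0 < V := vol_toReal_pos n c hρ
  set I := ∫ y in closedBall c ρ, |f y - ballAvg n f c ρ| with hIdef
  have hI0 : 0 ≤ I := integral_nonneg fun y => abs_nonneg _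
  have hterm0 : 0 ≤ V ^ (-(α / (n:ℝ))) * (V⁻¹ * I) := by positivity
  have h1 : ENNReal.ofReal (V ^ (-(α / (n:ℝ))) * (V⁻¹ * I)) ≤ campanato1Norm n α f := by
    refine le_iSup_of_le c (le_iSup_of_le ρ ?_)
    exact le_iSup_of_le hρ le_rfl
  have h2 : V ^ (-(α / (n:ℝ))) * (V⁻¹ * I) ≤ (campanato1Norm n α f).toReal := by
    have := ENNReal.toReal_mono hfin h1
    rwa [ENNReal.toReal_ofReal hterm0] at this
  have key : V ^ (α / (n:ℝ)) * V * (V ^ (-(α / (n:ℝ))) * (V⁻¹ * I)) = I := by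
    rw [Real.rpow_neg hV.le]
    have h3 : V ^ (α / (n:ℝ)) ≠ 0 := (Real.rpow_pos_of_pos hV _).ne'
    field_simp
  calc I = V ^ (α / (n:ℝ)) * V * (V ^ (-(α / (n:ℝ))) * (V⁻¹ * I)) := key.symm
    _ ≤ V ^ (α / (n:ℝ)) * V * (campanato1Norm n α f).toReal := by
        apply mul_le_mul_of_nonneg_left h2; positivity

lemma avg_step (n : ℕ) (α : ℝ) (f : EuclideanSpace ℝ (Fin n) → ℝ)
    (hf : LocallyIntegrable f volume) (hfin : campanato1Norm n α f ≠ ⊤)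
    (c : EuclideanSpace ℝ (Fin n)) {ρ : ℝ} (hρ : 0 < ρ) :
    |ballAvg n f c (2*ρ) - ballAvg n f c ρ|
      ≤ 2^n * (volume (closedBall c (2*ρ))).toReal ^ (α / n)
          * (campanato1Norm n α f).toReal := by
  set m2 := ballAvg n f c (2*ρ) with hm2
  set V := (volume (closedBall c ρ)).toReal with hVdef
  set V2 := (volume (closedBall c (2*ρ))).toReal with hV2def
  have hV : 0 < V := vol_toReal_pos n c hρ
  have hV2 : 0 < V2 := vol_toReal_pos n c (by linarith)
  have hint : IntegrableOn f (closedBall c (2*ρ)) volume :=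
    hf.integrableOn_isCompact (isCompact_closedBall _ _)
  have hsub : closedBall c ρ ⊆ closedBall c (2*ρ) :=
    closedBall_subset_closedBall (by linarith)
  have hint2 : IntegrableOn (fun y => f y - m2) (closedBall c (2*ρ)) volume :=
    hint.sub (integrableOn_const measure_closedBall_lt_top.ne)
  have h1 : ∫ y in closedBall c ρ, |f y - m2| ≤ ∫ y in closedBall c (2*ρ), |f y - m2| :=
    setIntegral_mono_set hint2.abs (Filter.Eventually.of_forall fun y => abs_nonneg _)
      (HasSubset.Subset.eventuallyLE hsub)
  have h2 : ∫ y in closedBall c ρ, (f y - m2) = (∫ y in closedBall c ρ, f y) - V * m2 := by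
    rw [integral_sub (hint.mono_set hsub) (integrableOn_const measure_closedBall_lt_top.ne),
      setIntegral_const, Measure.real]
    simp [smul_eq_mul, hVdef]
  have h3 : ballAvg n f c ρ - m2 = V⁻¹ * ∫ y in closedBall c ρ, (f y - m2) := by
    rw [h2, mul_sub, ballAvg, ← hVdef, ← mul_assoc, inv_mul_cancel₀ hV.ne', one_mul]
  have h4 : |ballAvg n f c ρ - m2| ≤ V⁻¹ * ∫ y in closedBall c ρ, |f y - m2| := by
    rw [h3, abs_mul, abs_inv, abs_of_pos hV]
    gcongr
    calc |∫ y in closedBall c ρ, (f y - m2)| ≤ ∫ y in closedBall c ρ, |f y - m2| := by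
          simpa [Real.norm_eq_abs] using
            norm_integral_le_integral_norm (μ := volume.restrict (closedBall c ρ))
              (fun y => f y - m2)
      _ ≤ _ := le_rfl
  have h5 : ∫ y in closedBall c (2*ρ), |f y - m2|
      ≤ V2 ^ (α / n) * V2 * (campanato1Norm n α f).toReal :=
    camp_bound n α f hfin c (by linarith)
  have hratio : V2 = 2^n * V := by
    rw [hVdef, hV2def, vol_eq n c hρ.le, vol_eq n c (by linarith : (0:ℝ) ≤ 2*ρ), mul_pow]
    ring
  have : |ballAvg n f c ρ - m2| ≤ V⁻¹ * (V2 ^ (α / n) * V2 * (campanato1Norm n α f).toReal) := by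
    refine h4.trans ?_
    gcongr
    exact h1.trans h5
  rw [abs_sub_comm] at this
  refine this.trans (le_of_eq ?_)
  rw [hratio]
  field_simp

lemma two_pow_rpow (α : ℝ) (m : ℕ) : ((2:ℝ)^m) ^ α = ((2:ℝ) ^ α) ^ m := by
  rw [← Real.rpow_natCast (2:ℝ) m, ← Real.rpow_natCast ((2:ℝ)^α) m,
    ← Real.rpow_mul (by norm_num), ← Real.rpow_mul (by norm_num), mul_comm]

lemma omega_pos (n : ℕ) : 0 < (volume (ball (0 : EuclideanSpace ℝ (Fin n)) 1)).toReal :=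
  ENNReal.toReal_pos (measure_ball_pos volume 0 one_pos).ne' measure_ball_lt_top.ne

lemma volpow (n : ℕ) (hn : 1 ≤ n) (α : ℝ) (c : EuclideanSpace ℝ (Fin n)) {ρ : ℝ} (hρ : 0 < ρ) :
    (volume (closedBall c ρ)).toReal ^ (α / (n:ℝ))
      = ρ ^ α * (volume (ball (0 : EuclideanSpace ℝ (Fin n)) 1)).toReal ^ (α / (n:ℝ)) := by
  have hn0 : (n:ℝ) ≠ 0 := Nat.cast_ne_zero.2 (by omega)
  rw [vol_eq n c hρ.le, Real.mul_rpow (pow_nonneg hρ.le _) ENNReal.toReal_nonneg,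
    ← Real.rpow_natCast ρ n, ← Real.rpow_mul hρ.le]
  rw [mul_div_cancel₀ α hn0]

lemma telescope (n : ℕ) (hn : 1 ≤ n) (α : ℝ) (f : EuclideanSpace ℝ (Fin n) → ℝ)
    (hf : LocallyIntegrable f volume) (hfin : campanato1Norm n α f ≠ ⊤)
    (c : EuclideanSpace ℝ (Fin n)) {ρ : ℝ} (hρ : 0 < ρ) (m : ℕ) :
    |ballAvg n f c (2^m * ρ) - ballAvg n f c ρ|
      ≤ (2^n * (volume (ball (0 : EuclideanSpace ℝ (Fin n)) 1)).toReal ^ (α / (n:ℝ))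
          * (campanato1Norm n α f).toReal * ρ ^ α)
        * ∑ j ∈ Finset.range m, ((2:ℝ) ^ α) ^ (j+1) := by
  induction m with
  | zero => simp
  | succ m ih =>
    have hρm : 0 < (2:ℝ)^m * ρ := by positivity
    have hstep := avg_step n α f hf hfin c hρm
    have heq : 2 * ((2:ℝ)^m * ρ) = 2^(m+1) * ρ := by ring
    rw [heq] at hstep
    have hvol : (volume (closedBall c ((2:ℝ)^(m+1) * ρ))).toReal ^ (α / (n:ℝ))
        = ((2:ℝ)^α)^(m+1) * ρ ^ α
          * (volume (ball (0 : EuclideanSpace ℝ (Fin n)) 1)).toReal ^ (α / (n:ℝ)) := by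
      rw [volpow n hn α c (by positivity : (0:ℝ) < 2^(m+1) * ρ),
        Real.mul_rpow (by positivity) hρ.le, two_pow_rpow]
    rw [hvol] at hstep
    calc |ballAvg n f c (2^(m+1) * ρ) - ballAvg n f c ρ|
        ≤ |ballAvg n f c (2^(m+1) * ρ) - ballAvg n f c (2^m * ρ)|
          + |ballAvg n f c (2^m * ρ) - ballAvg n f c ρ| := abs_sub_le _ _ _
      _ ≤ _ := by
          rw [Finset.sum_range_succ, mul_add]
          refine le_trans (add_le_add hstep ih) (le_of_eq (by ring))

lemma annulus_bound (n : ℕ) (hn : 1 ≤ n) (β α : ℝ) (hβ0 : 0 < β) (hβ1 : β < 1)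
    (f : EuclideanSpace ℝ (Fin n) → ℝ) (hf : LocallyIntegrable f volume)
    (hfin : campanato1Norm n α f ≠ ⊤)
    (x₀ x : EuclideanSpace ℝ (Fin n)) {r : ℝ} (hr : 0 < r) (hx : x ∈ closedBall x₀ r)
    (k : ℕ) :
    ∫⁻ y in {y : EuclideanSpace ℝ (Fin n) | 8*r*2^k ≤ ‖x - y‖ ∧ ‖x - y‖ < 8*r*2^(k+1)},
        ENNReal.ofReal (r ^ β * |f y - ballAvg n f x₀ r| / ‖x - y‖ ^ ((n : ℝ) - 1 + β))
      ≤ ENNReal.ofReal (((8:ℝ) ^ (-((n:ℝ)-1+β)) * 32^n * (1+2^n)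
          * (volume (ball (0 : EuclideanSpace ℝ (Fin n)) 1)).toReal ^ (α / (n:ℝ))
          * (volume (ball (0 : EuclideanSpace ℝ (Fin n)) 1)).toReal
          * (campanato1Norm n α f).toReal)
          * ((2:ℝ)^(1-β))^k * r^(1+α)
          * ∑ j ∈ Finset.range (k+5), ((2:ℝ)^α)^(j+1)) := by
  set ω := (volume (ball (0 : EuclideanSpace ℝ (Fin n)) 1)).toReal with hωdef
  have hω : 0 < ω := omega_pos n
  set N := (campanato1Norm n α f).toReal with hNdef
  have hN : 0 ≤ N := ENNReal.toReal_nonneg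
  set e := (n:ℝ) - 1 + β with hedef
  have hn1 : (1:ℝ) ≤ (n:ℝ) := by exact_mod_cast hn
  have he : 0 ≤ e := by rw [hedef]; linarith
  set fB := ballAvg n f x₀ r with hfBdef
  set A := {y : EuclideanSpace ℝ (Fin n) | 8*r*2^k ≤ ‖x - y‖ ∧ ‖x - y‖ < 8*r*2^(k+1)} with hAdef
  have h2k : (1:ℝ) ≤ 2^k := one_le_pow₀ (by norm_num)
  have hs0 : 0 < 8*r*2^k := by positivity
  set c1 := r ^ β * (8*r*2^k) ^ (-e) with hc1def
  have hc1 : 0 ≤ c1 := by positivity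
  set R := (2:ℝ)^(k+5) * r with hRdef
  have hR : 0 < R := by positivity
  -- subset of big ball
  have hsub : A ⊆ closedBall x₀ R := by
    intro y hy
    obtain ⟨hy1, hy2⟩ := hy
    have hdist : dist y x₀ ≤ dist y x + dist x x₀ := dist_triangle y x x₀
    have h1 : dist y x = ‖x - y‖ := by rw [dist_comm, dist_eq_norm]
    have h2 : dist x x₀ ≤ r := mem_closedBall.1 hx
    have : dist y x₀ ≤ 8*r*2^(k+1) + r := by
      rw [h1] at hdist; linarith
    refine mem_closedBall.2 (this.trans ?_)
    rw [hRdef, pow_add, pow_add]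
    nlinarith
  -- pointwise bound on A
  have hpt : ∀ y ∈ A, r ^ β * |f y - fB| / ‖x - y‖ ^ e ≤ c1 * |f y - fB| := by
    intro y hy
    obtain ⟨hy1, _⟩ := hy
    have hxy : (0:ℝ) < ‖x - y‖ := lt_of_lt_of_le hs0 hy1
    have hpow : (8*r*2^k) ^ e ≤ ‖x - y‖ ^ e := Real.rpow_le_rpow hs0.le hy1 he
    have hple : r ^ β * |f y - fB| / ‖x - y‖ ^ e ≤ r ^ β * |f y - fB| / (8*r*2^k) ^ e := by
      apply div_le_div_of_nonneg_left (by positivity) (Real.rpow_pos_of_pos hs0 e) hpow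
    refine hple.trans (le_of_eq ?_)
    rw [hc1def, Real.rpow_neg hs0.le]
    ring
  -- integrability
  have hfB_int : IntegrableOn (fun y => |f y - fB|) (closedBall x₀ R) volume := by
    exact ((hf.integrableOn_isCompact (isCompact_closedBall _ _)).sub
      (integrableOn_const measure_closedBall_lt_top.ne)).abs
  -- lintegral chain
  have hmeasA : MeasurableSet A := by
    have : A = (fun y : EuclideanSpace ℝ (Fin n) => ‖x - y‖) ⁻¹' (Set.Ico (8*r*2^k) (8*r*2^(k+1))) := rfl
    rw [this]
    exact (continuous_const.sub continuous_id).norm.measurable measurableSet_Ico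
  have step1 : ∫⁻ y in A, ENNReal.ofReal (r ^ β * |f y - fB| / ‖x - y‖ ^ e)
      ≤ ∫⁻ y in A, ENNReal.ofReal (c1 * |f y - fB|) := by
    apply lintegral_mono_ae
    rw [ae_restrict_iff' hmeasA]
    exact Filter.Eventually.of_forall fun y hy => ENNReal.ofReal_le_ofReal (hpt y hy)
  have step2 : ∫⁻ y in A, ENNReal.ofReal (c1 * |f y - fB|)
      = ENNReal.ofReal c1 * ∫⁻ y in A, ENNReal.ofReal (|f y - fB|) := by
    simp_rw [ENNReal.ofReal_mul hc1]
    exact lintegral_const_mul' _ _ ENNReal.ofReal_ne_top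
  have step3 : ∫⁻ y in A, ENNReal.ofReal (|f y - fB|)
      ≤ ∫⁻ y in closedBall x₀ R, ENNReal.ofReal (|f y - fB|) := lintegral_mono_set hsub
  have step4 : ∫⁻ y in closedBall x₀ R, ENNReal.ofReal (|f y - fB|)
      = ENNReal.ofReal (∫ y in closedBall x₀ R, |f y - fB|) :=
    (ofReal_integral_eq_lintegral_ofReal hfB_int
      (Filter.Eventually.of_forall fun y => abs_nonneg _)).symm
  -- real estimate on the big ball
  set mR := ballAvg n f x₀ R with hmRdef
  set D := ∑ j ∈ Finset.range (k+5), ((2:ℝ)^α)^(j+1) with hDdef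
  have hD0 : 0 ≤ D := Finset.sum_nonneg fun j _ => pow_nonneg (Real.rpow_nonneg (by norm_num) _) _
  have hDge : ((2:ℝ)^α)^(k+5) ≤ D := by
    have := Finset.single_le_sum (f := fun j => ((2:ℝ)^α)^(j+1))
      (fun i _ => pow_nonneg (Real.rpow_nonneg (by norm_num) _) _)
      (Finset.self_mem_range_succ (k+4))
    simpa using this
  set V := (volume (closedBall x₀ R)).toReal with hVdef
  have hV : 0 < V := vol_toReal_pos n x₀ hR
  have hωα : (0:ℝ) < ω ^ (α / (n:ℝ)) := Real.rpow_pos_of_pos hω _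
  have hVα : V ^ (α/(n:ℝ)) = R^α * ω^(α/(n:ℝ)) := volpow n hn α x₀ hR
  have hRα : R^α = ((2:ℝ)^α)^(k+5) * r^α := by
    rw [hRdef, Real.mul_rpow (by positivity) hr.le, two_pow_rpow]
  have hintR : IntegrableOn (fun y => |f y - mR|) (closedBall x₀ R) volume :=
    ((hf.integrableOn_isCompact (isCompact_closedBall _ _)).sub
      (integrableOn_const measure_closedBall_lt_top.ne)).abs
  have htri : ∫ y in closedBall x₀ R, |f y - fB|
      ≤ (∫ y in closedBall x₀ R, |f y - mR|) + V * |mR - fB| := by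
    have hptw : ∀ y, |f y - fB| ≤ |f y - mR| + |mR - fB| := fun y => by
      calc |f y - fB| = |(f y - mR) + (mR - fB)| := by ring_nf
        _ ≤ _ := abs_add_le _ _
    calc ∫ y in closedBall x₀ R, |f y - fB|
        ≤ ∫ y in closedBall x₀ R, (|f y - mR| + |mR - fB|) := by
          refine integral_mono hfB_int (hintR.add (integrableOn_const
            measure_closedBall_lt_top.ne)) hptw
      _ = (∫ y in closedBall x₀ R, |f y - mR|) + V * |mR - fB| := by
          rw [integral_add hintR (integrableOn_const measure_closedBall_lt_top.ne),
            setIntegral_const, Measure.real, smul_eq_mul]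
  have hcamp : ∫ y in closedBall x₀ R, |f y - mR| ≤ V ^ (α/(n:ℝ)) * V * N :=
    camp_bound n α f hfin x₀ hR
  have htel : |mR - fB| ≤ (2^n * ω ^ (α / (n:ℝ)) * N * r ^ α) * D := by
    rw [hmRdef, hfBdef, hRdef]
    exact telescope n hn α f hf hfin x₀ hr (k+5)
  have hVαle : V ^ (α/(n:ℝ)) ≤ D * (r^α * ω^(α/(n:ℝ))) := by
    rw [hVα, hRα]
    have h := mul_le_mul_of_nonneg_right
      (mul_le_mul_of_nonneg_right hDge (Real.rpow_nonneg hr.le α)) hωα.le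
    linarith [h]
  have hreal : ∫ y in closedBall x₀ R, |f y - fB|
      ≤ (1+2^n) * ω^(α/(n:ℝ)) * r^α * D * V * N := by
    have h1 : ∫ y in closedBall x₀ R, |f y - mR| ≤ D * (r^α * ω^(α/(n:ℝ))) * V * N := by
      refine hcamp.trans ?_
      gcongr
    have h2 : V * |mR - fB| ≤ V * ((2^n * ω ^ (α / (n:ℝ)) * N * r ^ α) * D) := by
      gcongr
    refine htri.trans ?_
    nlinarith [h1, h2]
  -- assemble
  have h2kpos : (0:ℝ) < (2:ℝ)^k := by positivity
  have hgroup1 : ((2:ℝ)^k)^(-e) * ((2:ℝ)^k)^((n:ℝ)) = ((2:ℝ)^(1-β))^k := by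
    rw [← Real.rpow_add h2kpos, show -e + (n:ℝ) = 1-β by rw [hedef]; ring]
    exact two_pow_rpow _ k
  have hgroup2 : r^β * r^(-e) * (r^α * r^((n:ℝ))) = r^(1+α) := by
    rw [← Real.rpow_add hr, ← Real.rpow_add hr, ← Real.rpow_add hr]
    congr 1
    rw [hedef]; ring
  have hVeq : V = 32^n * ((2:ℝ)^k)^((n:ℝ)) * r^((n:ℝ)) * ω := by
    rw [hVdef, vol_eq n x₀ hR.le, hRdef,
      show (2:ℝ)^(k+5) * r = (2^k) * 32 * r by rw [pow_add]; ring,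
      mul_pow, mul_pow, Real.rpow_natCast, Real.rpow_natCast, ← hωdef]
    ring
  have hsplit : ((8:ℝ)*r*2^k) ^ (-e) = 8^(-e) * r^(-e) * ((2:ℝ)^k)^(-e) := by
    rw [Real.mul_rpow (by positivity) (by positivity),
      Real.mul_rpow (by norm_num) hr.le]
  have harith : c1 * ((1+2^n) * ω^(α/(n:ℝ)) * r^α * D * V * N)
      = ((8:ℝ) ^ (-e) * 32^n * (1+2^n) * ω ^ (α / (n:ℝ)) * ω * N)
        * ((2:ℝ)^(1-β))^k * r^(1+α) * D := by
    rw [hc1def, hsplit, hVeq, ← hgroup1, ← hgroup2]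
    ring
  calc ∫⁻ y in A, ENNReal.ofReal (r ^ β * |f y - fB| / ‖x - y‖ ^ e)
      ≤ ENNReal.ofReal c1 * ∫⁻ y in A, ENNReal.ofReal (|f y - fB|) := step1.trans (le_of_eq step2)
    _ ≤ ENNReal.ofReal c1 * ENNReal.ofReal ((1+2^n) * ω^(α/(n:ℝ)) * r^α * D * V * N) := by
        refine mul_le_mul_right ?_ _
        refine (step3.trans (le_of_eq step4)).trans (ENNReal.ofReal_le_ofReal hreal)
    _ = ENNReal.ofReal (c1 * ((1+2^n) * ω^(α/(n:ℝ)) * r^α * D * V * N)) :=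
        (ENNReal.ofReal_mul hc1).symm
    _ ≤ _ := le_of_eq (by rw [harith])

lemma rt_alg {r t : ℝ} (hr : 0 < r) (ht : 0 < t) (θ γ : ℝ) :
    r ^ γ * (t/(8*r)) ^ θ = (8:ℝ)^(-θ) * r^(γ-θ) * t^θ := by
  rw [Real.div_rpow ht.le (by positivity), Real.mul_rpow (by norm_num) hr.le,
    Real.rpow_neg (by norm_num : (0:ℝ) ≤ 8), Real.rpow_sub hr]
  field_simp

lemma gle {q : ℝ} (hq : 1 < q) (m : ℕ) :
    ∑ k ∈ Finset.range m, q^k ≤ q^m / (q-1) := by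
  rw [geom_sum_eq hq.ne' m]
  have h1 : (0:ℝ) < q - 1 := by linarith
  exact (div_le_div_iff_of_pos_right h1).mpr (by linarith [pow_pos (lt_trans one_pos hq) m])

lemma geom_small {s : ℝ} (hs0 : 0 ≤ s) (hs1 : s < 1) (m : ℕ) :
    ∑ j ∈ Finset.range m, s^j ≤ (1-s)⁻¹ := by
  refine (Summable.sum_le_tsum (Finset.range m) (fun i _ => pow_nonneg hs0 i)
    (summable_geometric_of_lt_one hs0 hs1)).trans ?_
  rw [tsum_geometric_of_lt_one hs0 hs1]

lemma dyadic {r v : ℝ} (hr : 0 < r) (hv : 8*r ≤ v) :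
    ∃ k : ℕ, 8*r*2^k ≤ v ∧ v < 8*r*2^(k+1) := by
  have h8r : (0:ℝ) < 8*r := by linarith
  have hq1 : (1:ℝ) ≤ v/(8*r) := (one_le_div h8r).2 hv
  have hlog : 0 ≤ Real.logb 2 (v/(8*r)) := Real.logb_nonneg one_lt_two hq1
  refine ⟨⌊Real.logb 2 (v/(8*r))⌋₊, ?_, ?_⟩
  · have h1 : ((⌊Real.logb 2 (v/(8*r))⌋₊ : ℝ)) ≤ Real.logb 2 (v/(8*r)) := Nat.floor_le hlog
    have h2 : (2:ℝ)^(⌊Real.logb 2 (v/(8*r))⌋₊ : ℕ) ≤ v/(8*r) := by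
      calc (2:ℝ)^(⌊Real.logb 2 (v/(8*r))⌋₊ : ℕ) = (2:ℝ)^((⌊Real.logb 2 (v/(8*r))⌋₊ : ℕ):ℝ) :=
            (Real.rpow_natCast 2 _).symm
        _ ≤ (2:ℝ)^(Real.logb 2 (v/(8*r))) := Real.rpow_le_rpow_of_exponent_le one_le_two h1
        _ = v/(8*r) := Real.rpow_logb two_pos (by norm_num) (by positivity)
    calc 8*r*2^(⌊Real.logb 2 (v/(8*r))⌋₊) ≤ 8*r*(v/(8*r)) := by
          have := mul_le_mul_of_nonneg_left h2 h8r.le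
          linarith [this]
      _ = v := by field_simp
  · have h1 : Real.logb 2 (v/(8*r)) < (⌊Real.logb 2 (v/(8*r))⌋₊ : ℝ) + 1 :=
      Nat.lt_floor_add_one _
    have h2 : v/(8*r) < (2:ℝ)^((⌊Real.logb 2 (v/(8*r))⌋₊ : ℕ) + 1) := by
      calc v/(8*r) = (2:ℝ)^(Real.logb 2 (v/(8*r))) :=
            (Real.rpow_logb two_pos (by norm_num) (by positivity)).symm
        _ < (2:ℝ)^(((⌊Real.logb 2 (v/(8*r))⌋₊ : ℕ) + 1 : ℝ)) :=
            Real.rpow_lt_rpow_of_exponent_lt one_lt_two (by linarith)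
        _ = _ := by
            rw [show (((⌊Real.logb 2 (v/(8*r))⌋₊ : ℕ) + 1 : ℝ))
                = (((⌊Real.logb 2 (v/(8*r))⌋₊ + 1 : ℕ)):ℝ) by push_cast; ring,
              Real.rpow_natCast]
    have := (div_lt_iff₀ h8r).1 h2
    linarith [this]


set_option maxHeartbeats 1000000 in
/-- annulus integral of r^β |f - f_B| / |x-y|^{n-1+β}, 0 < β < 1. -/
theorem stmt6 (n : ℕ) (hn : 1 ≤ n) (β α : ℝ) (hβ0 : 0 < β) (hβ1 : β < 1) :
    ∃ c > (0 : ℝ), ∀ f : EuclideanSpace ℝ (Fin n) → ℝ, LocallyIntegrable f volume →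
      campanato1Norm n α f < ⊤ →
    ∀ (x₀ x : EuclideanSpace ℝ (Fin n)) (r t : ℝ), 0 < r → x ∈ closedBall x₀ r →
      8 * r < t →
      ((α < 0 →
        ∫⁻ y in {y : EuclideanSpace ℝ (Fin n) | 8 * r ≤ ‖x - y‖ ∧ ‖x - y‖ < t},
            ENNReal.ofReal (r ^ β * |f y - ballAvg n f x₀ r| / ‖x - y‖ ^ ((n : ℝ) - 1 + β)) ≤
          ENNReal.ofReal (c * r ^ (β + α) * t ^ (1 - β) * (campanato1Norm n α f).toReal)) ∧
      (α = 0 →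
        ∫⁻ y in {y : EuclideanSpace ℝ (Fin n) | 8 * r ≤ ‖x - y‖ ∧ ‖x - y‖ < t},
            ENNReal.ofReal (r ^ β * |f y - ballAvg n f x₀ r| / ‖x - y‖ ^ ((n : ℝ) - 1 + β)) ≤
          ENNReal.ofReal (c * r ^ β * t ^ (1 - β) * Real.log (t / r) *
            (campanato1Norm n α f).toReal)) ∧
      (0 < α →
        ∫⁻ y in {y : EuclideanSpace ℝ (Fin n) | 8 * r ≤ ‖x - y‖ ∧ ‖x - y‖ < t},
            ENNReal.ofReal (r ^ β * |f y - ballAvg n f x₀ r| / ‖x - y‖ ^ ((n : ℝ) - 1 + β)) ≤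
          ENNReal.ofReal (c * r ^ β * t ^ (1 - β + α) * (campanato1Norm n α f).toReal))) := by
  classical
  have hn1 : (1:ℝ) ≤ (n:ℝ) := by exact_mod_cast hn
  -- constants
  set ω : ℝ := (volume (ball (0 : EuclideanSpace ℝ (Fin n)) 1)).toReal with hωdef
  have hω : 0 < ω := omega_pos n
  set CC : ℝ := (8:ℝ)^(-((n:ℝ)-1+β)) * 32^n * (1+2^n) * ω^(α/(n:ℝ)) * ω with hCCdef
  have hCC0 : 0 < CC := by positivity
  set q : ℝ := (2:ℝ)^(1-β) with hqdef
  have hq1 : 1 < q := by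
    rw [hqdef]
    exact (Real.one_lt_rpow_iff_of_pos two_pos).2 (Or.inl ⟨one_lt_two, by linarith⟩)
  have hq0 : (0:ℝ) < q := lt_trans one_pos hq1
  have hqfac : (0:ℝ) ≤ q*(q-1)⁻¹ := mul_nonneg hq0.le (inv_nonneg.2 (by linarith))
  set s : ℝ := (2:ℝ)^α with hsdef
  have hs0 : 0 < s := Real.rpow_pos_of_pos two_pos α
  set c1 : ℝ := CC * (s*(1-s)⁻¹) * (q*(q-1)⁻¹) * 8^(-(1-β)) with hc1def
  set c2 : ℝ := CC * (1/Real.log 2 + 5) * (q*(q-1)⁻¹) * 8^(-(1-β)) with hc2def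
  set c3 : ℝ := CC * (s^6*(s-1)⁻¹) * ((q*s)*(q*s-1)⁻¹) * 8^(-(1-β+α)) with hc3def
  refine ⟨|c1|+|c2|+|c3|+1, by positivity, ?_⟩
  intro f hf hfin x₀ x r t hr hx hrt
  set N : ℝ := (campanato1Norm n α f).toReal with hNdef
  have hN0 : 0 ≤ N := ENNReal.toReal_nonneg
  have h8r : (0:ℝ) < 8*r := by linarith
  have ht : 0 < t := lt_trans h8r hrt
  have hquot : 1 < t/(8*r) := (one_lt_div h8r).2 hrt
  set K := ⌊Real.logb 2 (t/(8*r))⌋₊ with hKdef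
  have hlog0 : 0 ≤ Real.logb 2 (t/(8*r)) := Real.logb_nonneg one_lt_two hquot.le
  have hK1 : (2:ℝ)^K ≤ t/(8*r) := by
    calc (2:ℝ)^K = (2:ℝ)^((K:ℕ):ℝ) := (Real.rpow_natCast 2 _).symm
      _ ≤ (2:ℝ)^(Real.logb 2 (t/(8*r))) :=
          Real.rpow_le_rpow_of_exponent_le one_le_two (Nat.floor_le hlog0)
      _ = t/(8*r) := Real.rpow_logb two_pos (by norm_num) (by positivity)
  have hK2 : t ≤ 8*r*2^(K+1) := by
    have h2 : t/(8*r) < (2:ℝ)^(K + 1 : ℕ) := by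
      calc t/(8*r) = (2:ℝ)^(Real.logb 2 (t/(8*r))) :=
            (Real.rpow_logb two_pos (by norm_num) (by positivity)).symm
        _ < (2:ℝ)^(((K:ℕ) + 1 : ℝ)) :=
            Real.rpow_lt_rpow_of_exponent_lt one_lt_two (by
              have := Nat.lt_floor_add_one (Real.logb 2 (t/(8*r)))
              rw [← hKdef] at this; linarith)
        _ = _ := by
            rw [show (((K:ℕ) + 1 : ℝ)) = (((K + 1 : ℕ)):ℝ) by push_cast; ring,
              Real.rpow_natCast]
    have := (div_lt_iff₀ h8r).1 h2
    linarith [this]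
  -- the common bound
  set S := {y : EuclideanSpace ℝ (Fin n) | 8 * r ≤ ‖x - y‖ ∧ ‖x - y‖ < t} with hSdef
  set A : ℕ → Set (EuclideanSpace ℝ (Fin n)) :=
    fun k => {y | 8*r*2^k ≤ ‖x - y‖ ∧ ‖x - y‖ < 8*r*2^(k+1)} with hAdef
  set g : EuclideanSpace ℝ (Fin n) → ℝ≥0∞ :=
    fun y => ENNReal.ofReal (r ^ β * |f y - ballAvg n f x₀ r| / ‖x - y‖ ^ ((n : ℝ) - 1 + β))
    with hgdef
  set EXPR : ℕ → ℝ := fun k => CC * N * q^k * r^(1+α) * ∑ j ∈ Finset.range (k+5), s^(j+1)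
    with hEXPRdef
  have hEXPR0 : ∀ k, 0 ≤ EXPR k := by
    intro k
    have hsum : 0 ≤ ∑ j ∈ Finset.range (k+5), s^(j+1) :=
      Finset.sum_nonneg fun j _ => pow_nonneg hs0.le _
    have : 0 ≤ r^(1+α) := Real.rpow_nonneg hr.le _
    positivity
  have hmain : ∫⁻ y in S, g y ≤ ENNReal.ofReal (∑ k ∈ Finset.range (K+1), EXPR k) := by
    have hcover : S ⊆ ⋃ k : ℕ, (A k ∩ S) := by
      intro y hy
      obtain ⟨hy1, hy2⟩ := hy
      obtain ⟨k, hk1, hk2⟩ := dyadic hr hy1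
      exact Set.mem_iUnion.2 ⟨k, ⟨hk1, hk2⟩, hy1, hy2⟩
    have hempty : ∀ k ∉ Finset.range (K+1), (∫⁻ y in A k ∩ S, g y) = 0 := by
      intro k hk
      have hkK : K + 1 ≤ k := by simpa [Finset.mem_range] using hk
      have hAe : A k ∩ S = ∅ := by
        ext y
        simp only [Set.mem_inter_iff, Set.mem_empty_iff_false, iff_false]
        rintro ⟨⟨ha1, _⟩, _, hs2⟩
        have : (2:ℝ)^(K+1) ≤ 2^k := pow_le_pow_right₀ one_le_two hkK
        have h1 : 8*r*2^(K+1) ≤ 8*r*2^k := by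
          apply mul_le_mul_of_nonneg_left this h8r.le
        linarith
      rw [hAe]
      simp
    have hbnd : ∀ k : ℕ, (∫⁻ y in A k ∩ S, g y) ≤ ENNReal.ofReal (EXPR k) := by
      intro k
      refine (lintegral_mono_set Set.inter_subset_left).trans ?_
      exact annulus_bound n hn β α hβ0 hβ1 f hf hfin.ne x₀ x hr hx k
    calc ∫⁻ y in S, g y ≤ ∫⁻ y in ⋃ k : ℕ, (A k ∩ S), g y := lintegral_mono_set hcover
      _ ≤ ∑' k : ℕ, ∫⁻ y in A k ∩ S, g y := lintegral_iUnion_le _ _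
      _ = ∑ k ∈ Finset.range (K+1), ∫⁻ y in A k ∩ S, g y := tsum_eq_sum hempty
      _ ≤ ∑ k ∈ Finset.range (K+1), ENNReal.ofReal (EXPR k) :=
          Finset.sum_le_sum fun k _ => hbnd k
      _ = ENNReal.ofReal (∑ k ∈ Finset.range (K+1), EXPR k) :=
          (ENNReal.ofReal_sum_of_nonneg fun k _ => hEXPR0 k).symm
  -- common sum machinery
  have hM0 : 0 ≤ CC * N := mul_nonneg hCC0.le hN0
  have hr1α : 0 ≤ r^(1+α) := Real.rpow_nonneg hr.le _
  have hsum_q : ∑ k ∈ Finset.range (K+1), q^k ≤ (q*(q-1)⁻¹) * (t/(8*r))^(1-β) := by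
    have hqK : q^K ≤ (t/(8*r))^(1-β) := by
      rw [hqdef, ← two_pow_rpow (1-β) K]
      exact Real.rpow_le_rpow (by positivity) hK1 (by linarith)
    calc ∑ k ∈ Finset.range (K+1), q^k ≤ q^(K+1)/(q-1) := gle hq1 (K+1)
      _ = q^K * q * (q-1)⁻¹ := by rw [pow_succ, div_eq_mul_inv]
      _ ≤ (t/(8*r))^(1-β) * q * (q-1)⁻¹ :=
          mul_le_mul_of_nonneg_right (mul_le_mul_of_nonneg_right hqK hq0.le)
            (inv_nonneg.2 (by linarith))
      _ = (q*(q-1)⁻¹) * (t/(8*r))^(1-β) := by ring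
  refine ⟨?_, ?_, ?_⟩
  · -- case α < 0
    intro hα
    have hs1 : s < 1 := by
      rw [hsdef]; exact Real.rpow_lt_one_of_one_lt_of_neg one_lt_two hα
    have hDs : ∀ k : ℕ, ∑ j ∈ Finset.range (k+5), s^(j+1) ≤ (1-s)⁻¹ * s := by
      intro k
      calc ∑ j ∈ Finset.range (k+5), s^(j+1) = (∑ j ∈ Finset.range (k+5), s^j) * s := by
            simp_rw [pow_succ]; rw [Finset.sum_mul]
        _ ≤ (1-s)⁻¹ * s := mul_le_mul_of_nonneg_right (geom_small hs0.le hs1 _) hs0.le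
    have hsum1 : ∑ k ∈ Finset.range (K+1), EXPR k
        ≤ (CC * N * r^(1+α) * ((1-s)⁻¹ * s)) * ∑ k ∈ Finset.range (K+1), q^k := by
      rw [Finset.mul_sum]
      refine Finset.sum_le_sum fun k _ => ?_
      have hnn : 0 ≤ CC * N * q^k * r^(1+α) :=
        mul_nonneg (mul_nonneg hM0 (pow_nonneg hq0.le k)) hr1α
      calc EXPR k ≤ CC * N * q^k * r^(1+α) * ((1-s)⁻¹ * s) :=
            mul_le_mul_of_nonneg_left (hDs k) hnn
        _ = (CC * N * r^(1+α) * ((1-s)⁻¹ * s)) * q^k := by ring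
    have hM1 : 0 ≤ CC * N * r^(1+α) * ((1-s)⁻¹ * s) := by
      have h1s : 0 < 1 - s := by linarith
      exact mul_nonneg (mul_nonneg hM0 hr1α) (mul_nonneg (inv_nonneg.2 h1s.le) hs0.le)
    have hrt1 : r^(1+α) * (t/(8*r))^(1-β) = 8^(-(1-β)) * r^(β+α) * t^(1-β) := by
      rw [rt_alg hr ht (1-β) (1+α), show (1+α-(1-β)) = β+α by ring]
    have hfinal : ∑ k ∈ Finset.range (K+1), EXPR k ≤ c1 * r^(β+α) * t^(1-β) * N := by
      refine (hsum1.trans (mul_le_mul_of_nonneg_left hsum_q hM1)).trans (le_of_eq ?_)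
      calc (CC * N * r^(1+α) * ((1-s)⁻¹ * s)) * ((q*(q-1)⁻¹) * (t/(8*r))^(1-β))
          = (CC * N * ((1-s)⁻¹ * s) * (q*(q-1)⁻¹)) * (r^(1+α) * (t/(8*r))^(1-β)) := by ring
        _ = (CC * N * ((1-s)⁻¹ * s) * (q*(q-1)⁻¹)) * (8^(-(1-β)) * r^(β+α) * t^(1-β)) := by
            rw [hrt1]
        _ = c1 * r^(β+α) * t^(1-β) * N := by rw [hc1def]; ring
    refine hmain.trans (ENNReal.ofReal_le_ofReal ?_)
    refine hfinal.trans ?_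
    have hcle : c1 ≤ |c1|+|c2|+|c3|+1 := by
      have := le_abs_self c1
      have h2 := abs_nonneg c2
      have h3 := abs_nonneg c3
      linarith
    exact mul_le_mul_of_nonneg_right (mul_le_mul_of_nonneg_right
      (mul_le_mul_of_nonneg_right hcle (Real.rpow_nonneg hr.le _))
      (Real.rpow_nonneg ht.le _)) hN0
  · -- case α = 0
    intro hα
    subst hα
    have hs1' : s = 1 := by rw [hsdef, Real.rpow_zero]
    have hDk : ∀ k : ℕ, ∑ j ∈ Finset.range (k+5), s^(j+1) = (k:ℝ)+5 := by
      intro k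
      rw [hs1']
      simp only [one_pow, Finset.sum_const, Finset.card_range, nsmul_eq_mul, mul_one]
      push_cast; ring
    have hlogtr : 1 ≤ Real.log (t/r) := by
      have h8'' : (8:ℝ) ≤ t/r := ((lt_div_iff₀ hr).2 (by linarith)).le
      have hl8 : Real.log 8 ≤ Real.log (t/r) := Real.log_le_log (by norm_num) h8''
      have h18 : (1:ℝ) ≤ Real.log 8 :=
        (Real.le_log_iff_exp_le (by norm_num)).2 (le_trans Real.exp_one_lt_d9.le (by norm_num))
      linarith
    have hKlog : (K:ℝ) ≤ Real.log (t/r) / Real.log 2 := by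
      have h1 : (K:ℝ) ≤ Real.logb 2 (t/(8*r)) := Nat.floor_le hlog0
      have h2 : Real.logb 2 (t/(8*r)) ≤ Real.logb 2 (t/r) := by
        refine (Real.logb_le_logb one_lt_two (by positivity) (by positivity)).2 ?_
        rw [div_le_div_iff₀ (by positivity) hr]
        nlinarith
      rw [Real.log_div_log]
      linarith
    have hK5 : (K:ℝ)+5 ≤ (1/Real.log 2 + 5) * Real.log (t/r) := by
      have hl2 : 0 < Real.log 2 := Real.log_pos one_lt_two
      have hexp : (1/Real.log 2 + 5) * Real.log (t/r)
          = Real.log (t/r)/Real.log 2 + 5*Real.log (t/r) := by ring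
      rw [hexp]
      have : Real.log (t/r)/Real.log 2 = Real.log (t/r) * (Real.log 2)⁻¹ := by ring
      linarith
    have hsum1 : ∑ k ∈ Finset.range (K+1), EXPR k
        ≤ (CC * N * r^(1+(0:ℝ)) * ((K:ℝ)+5)) * ∑ k ∈ Finset.range (K+1), q^k := by
      rw [Finset.mul_sum]
      refine Finset.sum_le_sum fun k hk => ?_
      have hkK : (k:ℝ) ≤ (K:ℝ) := by
        have := Finset.mem_range.1 hk; exact_mod_cast Nat.lt_succ_iff.1 this
      have hnn : 0 ≤ CC * N * q^k * r^(1+(0:ℝ)) :=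
        mul_nonneg (mul_nonneg hM0 (pow_nonneg hq0.le k)) hr1α
      calc EXPR k = CC * N * q^k * r^(1+(0:ℝ)) * ((k:ℝ)+5) := by simp only [hEXPRdef]; rw [hDk k]
        _ ≤ CC * N * q^k * r^(1+(0:ℝ)) * ((K:ℝ)+5) :=
            mul_le_mul_of_nonneg_left (by linarith) hnn
        _ = (CC * N * r^(1+(0:ℝ)) * ((K:ℝ)+5)) * q^k := by ring
    have hM1 : 0 ≤ CC * N * r^(1+(0:ℝ)) := mul_nonneg hM0 hr1α
    have hrt1 : r^(1+(0:ℝ)) * (t/(8*r))^(1-β) = 8^(-(1-β)) * r^β * t^(1-β) := by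
      rw [rt_alg hr ht (1-β) (1+(0:ℝ)), show (1+(0:ℝ)-(1-β)) = β by ring]
    have hfinal : ∑ k ∈ Finset.range (K+1), EXPR k
        ≤ c2 * r^β * t^(1-β) * Real.log (t/r) * N := by
      have step1 : ∑ k ∈ Finset.range (K+1), EXPR k
          ≤ (CC * N * r^(1+(0:ℝ)) * ((K:ℝ)+5)) * ((q*(q-1)⁻¹) * (t/(8*r))^(1-β)) := by
        refine hsum1.trans (mul_le_mul_of_nonneg_left hsum_q ?_)
        exact mul_nonneg hM1 (by positivity)
      have step2 : (CC * N * r^(1+(0:ℝ)) * ((K:ℝ)+5)) * ((q*(q-1)⁻¹) * (t/(8*r))^(1-β))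
          ≤ (CC * N * r^(1+(0:ℝ)) * ((1/Real.log 2 + 5) * Real.log (t/r)))
            * ((q*(q-1)⁻¹) * (t/(8*r))^(1-β)) := by
        refine mul_le_mul_of_nonneg_right (mul_le_mul_of_nonneg_left hK5 hM1) ?_
        exact mul_nonneg hqfac (Real.rpow_nonneg (by positivity) _)
      refine (step1.trans step2).trans (le_of_eq ?_)
      calc (CC * N * r^(1+(0:ℝ)) * ((1/Real.log 2 + 5) * Real.log (t/r)))
            * ((q*(q-1)⁻¹) * (t/(8*r))^(1-β))
          = (CC * N * ((1/Real.log 2 + 5) * Real.log (t/r)) * (q*(q-1)⁻¹))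
            * (r^(1+(0:ℝ)) * (t/(8*r))^(1-β)) := by ring
        _ = (CC * N * ((1/Real.log 2 + 5) * Real.log (t/r)) * (q*(q-1)⁻¹))
            * (8^(-(1-β)) * r^β * t^(1-β)) := by rw [hrt1]
        _ = c2 * r^β * t^(1-β) * Real.log (t/r) * N := by rw [hc2def]; ring
    refine hmain.trans (ENNReal.ofReal_le_ofReal ?_)
    refine hfinal.trans ?_
    have hcle : c2 ≤ |c1|+|c2|+|c3|+1 := by
      have := le_abs_self c2
      have h2 := abs_nonneg c1
      have h3 := abs_nonneg c3
      linarith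
    have hlog0' : 0 ≤ Real.log (t/r) := by linarith
    exact mul_le_mul_of_nonneg_right (mul_le_mul_of_nonneg_right
      (mul_le_mul_of_nonneg_right
        (mul_le_mul_of_nonneg_right hcle (Real.rpow_nonneg hr.le _))
        (Real.rpow_nonneg ht.le _)) hlog0') hN0
  · -- case 0 < α
    intro hα
    have hs1 : 1 < s := by
      rw [hsdef]
      exact (Real.one_lt_rpow_iff_of_pos two_pos).2 (Or.inl ⟨one_lt_two, hα⟩)
    have hqs_eq : q * s = (2:ℝ)^(1-β+α) := by
      rw [hqdef, hsdef, ← Real.rpow_add two_pos]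
    have hqs1 : 1 < q * s := by
      rw [hqs_eq]
      exact (Real.one_lt_rpow_iff_of_pos two_pos).2 (Or.inl ⟨one_lt_two, by linarith⟩)
    have hqs0 : 0 < q * s := lt_trans one_pos hqs1
    have hDk : ∀ k : ℕ, ∑ j ∈ Finset.range (k+5), s^(j+1) ≤ s^6*(s-1)⁻¹ * s^k := by
      intro k
      calc ∑ j ∈ Finset.range (k+5), s^(j+1) = (∑ j ∈ Finset.range (k+5), s^j) * s := by
            simp_rw [pow_succ]; rw [Finset.sum_mul]
        _ ≤ (s^(k+5)/(s-1)) * s := mul_le_mul_of_nonneg_right (gle hs1 (k+5)) hs0.le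
        _ = s^6*(s-1)⁻¹ * s^k := by rw [div_eq_mul_inv]; ring
    have hsum1 : ∑ k ∈ Finset.range (K+1), EXPR k
        ≤ (CC * N * r^(1+α) * (s^6*(s-1)⁻¹)) * ∑ k ∈ Finset.range (K+1), (q*s)^k := by
      rw [Finset.mul_sum]
      refine Finset.sum_le_sum fun k _ => ?_
      have hnn : 0 ≤ CC * N * q^k * r^(1+α) :=
        mul_nonneg (mul_nonneg hM0 (pow_nonneg hq0.le k)) hr1α
      calc EXPR k ≤ CC * N * q^k * r^(1+α) * (s^6*(s-1)⁻¹ * s^k) :=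
            mul_le_mul_of_nonneg_left (hDk k) hnn
        _ = (CC * N * r^(1+α) * (s^6*(s-1)⁻¹)) * (q^k * s^k) := by ring
        _ = (CC * N * r^(1+α) * (s^6*(s-1)⁻¹)) * (q*s)^k := by rw [mul_pow]
    have hM1 : 0 ≤ CC * N * r^(1+α) * (s^6*(s-1)⁻¹) := by
      have : (0:ℝ) < s - 1 := by linarith
      exact mul_nonneg (mul_nonneg hM0 hr1α)
        (mul_nonneg (pow_nonneg hs0.le 6) (inv_nonneg.2 this.le))
    have hsum_qs : ∑ k ∈ Finset.range (K+1), (q*s)^k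
        ≤ ((q*s)*((q*s)-1)⁻¹) * (t/(8*r))^(1-β+α) := by
      have hqsK : (q*s)^K ≤ (t/(8*r))^(1-β+α) := by
        rw [hqs_eq, ← two_pow_rpow (1-β+α) K]
        exact Real.rpow_le_rpow (by positivity) hK1 (by linarith)
      calc ∑ k ∈ Finset.range (K+1), (q*s)^k ≤ (q*s)^(K+1)/((q*s)-1) := gle hqs1 (K+1)
        _ = (q*s)^K * (q*s) * ((q*s)-1)⁻¹ := by rw [pow_succ, div_eq_mul_inv]
        _ ≤ (t/(8*r))^(1-β+α) * (q*s) * ((q*s)-1)⁻¹ :=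
            mul_le_mul_of_nonneg_right (mul_le_mul_of_nonneg_right hqsK hqs0.le)
              (inv_nonneg.2 (by linarith))
        _ = ((q*s)*((q*s)-1)⁻¹) * (t/(8*r))^(1-β+α) := by ring
    have hrt1 : r^(1+α) * (t/(8*r))^(1-β+α) = 8^(-(1-β+α)) * r^β * t^(1-β+α) := by
      rw [rt_alg hr ht (1-β+α) (1+α), show (1+α-(1-β+α)) = β by ring]
    have hfinal : ∑ k ∈ Finset.range (K+1), EXPR k ≤ c3 * r^β * t^(1-β+α) * N := by
      refine (hsum1.trans (mul_le_mul_of_nonneg_left hsum_qs hM1)).trans (le_of_eq ?_)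
      calc (CC * N * r^(1+α) * (s^6*(s-1)⁻¹)) * (((q*s)*((q*s)-1)⁻¹) * (t/(8*r))^(1-β+α))
          = (CC * N * (s^6*(s-1)⁻¹) * ((q*s)*((q*s)-1)⁻¹))
            * (r^(1+α) * (t/(8*r))^(1-β+α)) := by ring
        _ = (CC * N * (s^6*(s-1)⁻¹) * ((q*s)*((q*s)-1)⁻¹))
            * (8^(-(1-β+α)) * r^β * t^(1-β+α)) := by rw [hrt1]
        _ = c3 * r^β * t^(1-β+α) * N := by rw [hc3def]; ring
    refine hmain.trans (ENNReal.ofReal_le_ofReal ?_)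
    refine hfinal.trans ?_
    have hcle : c3 ≤ |c1|+|c2|+|c3|+1 := by
      have := le_abs_self c3
      have h2 := abs_nonneg c1
      have h3 := abs_nonneg c2
      linarith
    exact mul_le_mul_of_nonneg_right (mul_le_mul_of_nonneg_right
      (mul_le_mul_of_nonneg_right hcle (Real.rpow_nonneg hr.le _))
      (Real.rpow_nonneg ht.le _)) hN0
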